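/- Let p ≥ 1 and Y ⊆ ℝ^p satisfy Assumption A (Y is nonempty, bounded below, and Y↑ is closed). Then Y↑ = conv(Y_ESN) + ℝ≥0^p. -/

import Mathlib

open Set Pointwise

/-- The set of points of `A` that are nondominated in `A` (componentwise order). -/
def nonDomPts (p : ℕ) (A : Set (Fin p → ℝ)) : Set (Fin p → ℝ) :=
  {y | y ∈ A ∧ ∀ y' ∈ A, y' ≤ y → y' = y}

/-- The upper image `Y↑ = conv Y + ℝ≥0^p`. -/
def upImage (p : ℕ) (Y : Set (Fin p → ℝ)) : Set (Fin p → ℝ) :=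
  convexHull ℝ Y + {r : Fin p → ℝ | 0 ≤ r}

/-- Extreme-supported nondominated points of `Y`. -/
def ESN (p : ℕ) (Y : Set (Fin p → ℝ)) : Set (Fin p → ℝ) :=
  {y | y ∈ nonDomPts p Y ∧ y ∈ Set.extremePoints ℝ (convexHull ℝ Y)}

variable {p : ℕ}

lemma exists_support {C : Set (Fin p → ℝ)} (hCc : IsClosed C) (hCv : Convex ℝ C)
    {a u : Fin p → ℝ} (ha : a ∈ C) (hu : u ∈ vectorSpan ℝ C) (hu0 : u ≠ 0)
    (hexit : ∀ t : ℝ, 0 < t → a + t • u ∉ C) :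
    ∃ g : (Fin p → ℝ) →L[ℝ] ℝ, (∀ z ∈ C, g z ≤ g a) ∧ (∃ w ∈ C, g w < g a) := by
  set V : Submodule ℝ (Fin p → ℝ) := vectorSpan ℝ C with hV
  set C₀ : Set V := {v : V | a + (v : Fin p → ℝ) ∈ C} with hC₀
  have hmem : ∀ z ∈ C, z - a ∈ V := fun z hz => by
    simpa [vsub_eq_sub] using vsub_mem_vectorSpan ℝ hz ha
  have h0 : (0 : V) ∈ C₀ := by simp [hC₀, ha]
  have hC₀v : Convex ℝ C₀ := by
    intro v hv w hw s t hs ht hst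
    have h := hCv hv hw hs ht hst
    have heq : a + ((s • v + t • w : V) : Fin p → ℝ)
        = s • (a + (v : Fin p → ℝ)) + t • (a + (w : Fin p → ℝ)) := by
      push_cast
      match_scalars <;> linarith
    show a + ((s • v + t • w : V) : Fin p → ℝ) ∈ C
    rw [heq]; exact h
  have hC₀c : IsClosed C₀ := by
    have hcont : Continuous fun v : V => a + (v : Fin p → ℝ) :=
      continuous_const.add continuous_subtype_val
    exact hCc.preimage hcont
  have hspan : affineSpan ℝ C₀ = ⊤ := by
    rw [AffineSubspace.affineSpan_eq_top_iff_vectorSpan_eq_top_of_nonempty ℝ V V ⟨0, h0⟩]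
    apply Submodule.map_injective_of_injective V.injective_subtype
    rw [Submodule.map_top, Submodule.range_subtype, vectorSpan_def, Submodule.map_span]
    have himg : V.subtype '' (C₀ -ᵥ C₀) = C -ᵥ C := by
      ext x
      constructor
      · rintro ⟨y, ⟨v, hv, w, hw, rfl⟩, rfl⟩
        exact ⟨a + (v : Fin p → ℝ), hv, a + (w : Fin p → ℝ), hw, by simp [vsub_eq_sub]⟩
      · rintro ⟨z, hz, w, hw, rfl⟩
        have hz' : (⟨z - a, hmem z hz⟩ : V) ∈ C₀ := by simp [hC₀, hz]
        have hw' : (⟨w - a, hmem w hw⟩ : V) ∈ C₀ := by simp [hC₀, hw]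
        exact ⟨_, Set.vsub_mem_vsub hz' hw', by simp [vsub_eq_sub]⟩
    rw [himg, ← vectorSpan_def]
  have hint : (interior C₀).Nonempty := by
    rw [hC₀v.interior_nonempty_iff_affineSpan_eq_top]
    exact hspan
  have h0ni : (0 : V) ∉ interior C₀ := by
    intro h
    obtain ⟨ε, hε, hball⟩ := Metric.mem_nhds_iff.1 (mem_interior_iff_mem_nhds.1 h)
    have huV : u ∈ V := hu
    set u' : V := ⟨u, huV⟩ with hu'
    have hu'0 : u' ≠ 0 := fun h' => hu0 (by simpa [hu'] using congrArg Subtype.val h')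
    have hnu : 0 < ‖u'‖ := norm_pos_iff.2 hu'0
    set t : ℝ := ε / (2 * ‖u'‖) with htdef
    have ht : 0 < t := by positivity
    have hball' : t • u' ∈ Metric.ball (0 : V) ε := by
      have hns : ‖t • u'‖ = t * ‖u'‖ := by
        rw [norm_smul (r := t) (x := u'), Real.norm_eq_abs, abs_of_pos ht]
      rw [Metric.mem_ball, dist_zero_right, hns, htdef, div_mul_eq_mul_div,
        div_lt_iff₀ (by positivity : (0:ℝ) < 2 * ‖u'‖)]
      nlinarith
    have hmemC : (t • u' : V) ∈ C₀ := hball hball'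
    exact hexit t ht (by simpa [hC₀, hu'] using hmemC)
  obtain ⟨f, hf⟩ := geometric_hahn_banach_open_point hC₀v.interior isOpen_interior h0ni
  obtain ⟨z₀, hz₀⟩ := hint
  have hf0 : f (0 : V) = 0 := map_zero f
  have hfz₀ : f z₀ < 0 := by rw [← hf0]; exact hf z₀ hz₀
  have hfle : ∀ z ∈ C₀, f z ≤ 0 := by
    intro z hz
    by_contra hpos
    push_neg at hpos
    have hAB : 0 < f z - f z₀ := by linarith
    set t : ℝ := f z / (2 * (f z - f z₀)) with htdef
    have ht0 : 0 < t := by positivity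
    have ht1 : t < 1 := by
      rw [htdef, div_lt_one (by linarith)]
      linarith
    have hq : (1 - t) • z + t • z₀ ∈ interior C₀ :=
      hC₀v.openSegment_self_interior_subset_interior hz hz₀
        ⟨1 - t, t, by linarith, ht0, by ring, rfl⟩
    have hlt := hf _ hq
    rw [map_add, map_smul, map_smul, smul_eq_mul, smul_eq_mul, hf0] at hlt
    have hteq : t * (f z - f z₀) = f z / 2 := by
      rw [htdef]; field_simp
    nlinarith
  obtain ⟨g, hg, -⟩ := exists_extension_norm_eq V f
  have key : ∀ z (hz : z ∈ C), g z = g a + f ⟨z - a, hmem z hz⟩ := by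
    intro z hz
    have h1 : g (z - a) = f ⟨z - a, hmem z hz⟩ := hg ⟨z - a, hmem z hz⟩
    rw [← h1, map_sub]; ring
  have hz₀C₀ : z₀ ∈ C₀ := interior_subset hz₀
  have hz₀mem : a + (z₀ : Fin p → ℝ) ∈ C := hz₀C₀
  refine ⟨g, fun z hz => ?_, a + (z₀ : Fin p → ℝ), hz₀mem, ?_⟩
  · rw [key z hz]
    have := hfle ⟨z - a, hmem z hz⟩ (by simp [hC₀, hz])
    linarith
  · have h2 : g (a + (z₀ : Fin p → ℝ)) = g a + f z₀ := by
      rw [map_add, hg z₀]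
    rw [h2]
    linarith

lemma klee (d : ℕ) : ∀ (C : Set (Fin p → ℝ)), IsClosed C → Convex ℝ C →
    (∃ b, ∀ z ∈ C, b ≤ z) → Module.finrank ℝ (vectorSpan ℝ C) ≤ d →
    ∀ x ∈ C, x ∈ convexHull ℝ (C.extremePoints ℝ) + {r : Fin p → ℝ | 0 ≤ r} := by
  induction d using Nat.strong_induction_on with
  | _ d ih =>
  intro C hCc hCv hbd hdim x hx
  obtain ⟨b, hb⟩ := hbd
  set K : Set (Fin p → ℝ) := {r | 0 ≤ r} with hK
  have hKv : Convex ℝ K := by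
    intro r hr s hs a b' ha hb' hab
    have hr' : (0 : Fin p → ℝ) ≤ r := hr
    have hs' : (0 : Fin p → ℝ) ≤ s := hs
    show (0 : Fin p → ℝ) ≤ a • r + b' • s
    rw [Pi.le_def]
    intro i
    have := add_nonneg (mul_nonneg ha (hr' i)) (mul_nonneg hb' (hs' i))
    simpa using this
  set S : Set (Fin p → ℝ) := convexHull ℝ (C.extremePoints ℝ) + K with hS
  have hSv : Convex ℝ S := (convex_convexHull ℝ _).add hKv
  have hKadd : ∀ {s r : Fin p → ℝ}, s ∈ S → 0 ≤ r → s + r ∈ S := by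
    intro s r hs hr
    obtain ⟨c, hc, r', hr', hcr⟩ := Set.mem_add.1 hs
    refine Set.mem_add.2 ⟨c, hc, r' + r, ?_, ?_⟩
    · exact add_nonneg hr' hr
    · rw [← hcr]; abel
  by_cases hsing : ∀ y ∈ C, y = x
  · have hxe : x ∈ C.extremePoints ℝ := ⟨hx, fun x₁ h₁ x₂ h₂ _ => hsing _ h₁⟩
    exact Set.mem_add.2 ⟨x, subset_convexHull ℝ _ hxe, 0, (by simp [hK] : (0 : Fin p → ℝ) ∈ K), add_zero x⟩
  push_neg at hsing
  obtain ⟨y, hy, hyx⟩ := hsing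
  have hvV : y - x ∈ vectorSpan ℝ C := by
    simpa [vsub_eq_sub] using vsub_mem_vectorSpan ℝ hy hx
  have hv0 : y - x ≠ 0 := sub_ne_zero.2 hyx
  set v : Fin p → ℝ := y - x with hv
  set T : Set ℝ := {t | x + t • v ∈ C} with hT
  have hTc : IsClosed T := by
    have hcont : Continuous fun t : ℝ => x + t • v :=
      continuous_const.add (continuous_id.smul continuous_const)
    exact hCc.preimage hcont
  have h0T : (0 : ℝ) ∈ T := by simp [hT, hx]
  have hTne : T.Nonempty := ⟨0, h0T⟩
  have hTv : Convex ℝ T := by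
    intro s hs t' ht' α β hα hβ hαβ
    have heq : x + (α • s + β • t') • v = α • (x + s • v) + β • (x + t' • v) := by
      match_scalars
      · simp only [smul_eq_mul]; linear_combination -hαβ
      · simp only [smul_eq_mul]; ring
    show x + (α • s + β • t') • v ∈ C
    rw [heq]
    exact hCv hs ht' hα hβ hαβ
  -- recession directions are nonnegative
  have hrec : ∀ w : Fin p → ℝ, (∀ t : ℝ, 0 ≤ t → x + t • w ∈ C) → 0 ≤ w := by
    intro w hw
    rw [Pi.le_def]
    intro i
    simp only [Pi.zero_apply]
    by_contra hlt
    push_neg at hlt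
    have hwi : w i < 0 := hlt
    have hbx : b i ≤ x i := (hb x hx) i
    set t : ℝ := (b i - x i - 1) / w i with ht
    have ht0 : 0 ≤ t := by
      rw [ht]
      exact div_nonneg_iff.2 (Or.inr ⟨by linarith, hwi.le⟩)
    have hmem := hb _ (hw t ht0)
    have hline : (x + t • w) i = x i + t * w i := by simp
    have htw : t * w i = b i - x i - 1 := by
      rw [ht, div_mul_cancel₀ _ (ne_of_lt hwi)]
    have := (hmem) i
    rw [hline, htw] at this
    linarith
  -- the face handler
  have hface : ∀ aa uu : Fin p → ℝ, aa ∈ C → uu ∈ vectorSpan ℝ C → uu ≠ 0 →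
      (∀ t : ℝ, 0 < t → aa + t • uu ∉ C) → aa ∈ S := by
    intro aa uu haa huu huu0 hex
    obtain ⟨g, hg1, w, hwC, hgw⟩ := exists_support hCc hCv haa huu huu0 hex
    set F : Set (Fin p → ℝ) := {z ∈ C | ∀ w' ∈ C, g w' ≤ g z} with hF
    have hexp : IsExposed ℝ C F := fun _ => ⟨g, rfl⟩
    have haF : aa ∈ F := ⟨haa, fun w' hw' => hg1 w' hw'⟩
    have hFC : F ⊆ C := fun z hz => hz.1
    have hgconst : ∀ z ∈ F, g z = g aa := fun z hz =>
      le_antisymm (hg1 z (hFC hz)) (hz.2 aa haa)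
    have hFc : IsClosed F := by
      have hFeq : F = C ∩ ⋂ w' ∈ C, {z | g w' ≤ g z} := by
        ext z
        simp [hF, Set.mem_iInter₂]
      rw [hFeq]
      exact hCc.inter (isClosed_biInter fun w' _ => isClosed_le continuous_const g.continuous)
    have hFv : Convex ℝ F := hexp.convex hCv
    have hlt : vectorSpan ℝ F < vectorSpan ℝ C := by
      refine lt_of_le_of_ne (vectorSpan_mono ℝ hFC) (fun heq => ?_)
      have hsub : vectorSpan ℝ F ≤ LinearMap.ker (g : (Fin p → ℝ) →ₗ[ℝ] ℝ) := by
        rw [vectorSpan_def]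
        refine Submodule.span_le.2 ?_
        rintro _ ⟨z1, hz1, z2, hz2, rfl⟩
        rw [SetLike.mem_coe, LinearMap.mem_ker]
        show g (z1 -ᵥ z2) = 0
        rw [vsub_eq_sub, map_sub, hgconst z1 hz1, hgconst z2 hz2, sub_self]
      have hwa : w - aa ∈ vectorSpan ℝ C := by
        simpa [vsub_eq_sub] using vsub_mem_vectorSpan ℝ hwC haa
      rw [← heq] at hwa
      have hker := hsub hwa
      rw [LinearMap.mem_ker] at hker
      have : g (w - aa) = 0 := hker
      rw [map_sub] at this
      linarith
    have hdrop := Submodule.finrank_lt_finrank_of_lt hlt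
    have haS := ih (Module.finrank ℝ (vectorSpan ℝ F)) (lt_of_lt_of_le hdrop hdim) F hFc hFv
      ⟨b, fun z hz => hb z (hFC hz)⟩ le_rfl aa haF
    have hsubext : F.extremePoints ℝ ⊆ C.extremePoints ℝ :=
      (hexp.isExtreme).extremePoints_subset_extremePoints
    obtain ⟨c, hc, r, hr, hcr⟩ := Set.mem_add.1 haS
    exact Set.mem_add.2 ⟨c, convexHull_mono hsubext hc, r, hr, hcr⟩
  by_cases hA : BddAbove T <;> by_cases hB : BddBelow T
  · -- bounded both ways : x is a convex combination of two boundary points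
    have htP : sSup T ∈ T := hTc.csSup_mem hTne hA
    have htM : sInf T ∈ T := hTc.csInf_mem hTne hB
    have h0P : 0 ≤ sSup T := le_csSup hA h0T
    have h0M : sInf T ≤ 0 := csInf_le hB h0T
    have hexitP : ∀ s : ℝ, 0 < s → (x + sSup T • v) + s • v ∉ C := by
      intro s hs hmem
      have heq : (x + sSup T • v) + s • v = x + (sSup T + s) • v := by module
      rw [heq] at hmem
      have : sSup T + s ∈ T := hmem
      linarith [le_csSup hA this]
    have hexitM : ∀ s : ℝ, 0 < s → (x + sInf T • v) + s • (-v) ∉ C := by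
      intro s hs hmem
      have heq : (x + sInf T • v) + s • (-v) = x + (sInf T - s) • v := by module
      rw [heq] at hmem
      have : sInf T - s ∈ T := hmem
      linarith [csInf_le hB this]
    have hSP : x + sSup T • v ∈ S := hface _ v htP hvV hv0 hexitP
    have hSM : x + sInf T • v ∈ S :=
      hface _ (-v) htM (neg_mem hvV) (neg_ne_zero.2 hv0) hexitM
    rcases lt_or_eq_of_le (h0M.trans h0P) with hlt | heq
    · set θ : ℝ := sSup T / (sSup T - sInf T) with hθdef
      set σ : ℝ := -sInf T / (sSup T - sInf T) with hσdef
      have hd : 0 < sSup T - sInf T := by linarith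
      have hθ : 0 ≤ θ := div_nonneg h0P hd.le
      have hσ : 0 ≤ σ := div_nonneg (by linarith) hd.le
      have hθσ : θ + σ = 1 := by rw [hθdef, hσdef]; field_simp; ring
      have hcomb : θ * sInf T + σ * sSup T = 0 := by
        rw [hθdef, hσdef]; field_simp; ring
      have hxeq : θ • (x + sInf T • v) + σ • (x + sSup T • v) = x := by
        match_scalars
        · linarith
        · linear_combination hcomb
      have := hSv hSM hSP hθ hσ hθσ
      rwa [hxeq] at this
    · have h0 : sSup T = 0 := le_antisymm (heq ▸ h0M) h0P
      have : x + sSup T • v = x := by rw [h0]; simp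
      rwa [this] at hSP
  · -- unbounded below : -v is a recession direction
    have hall : ∀ t : ℝ, t ≤ 0 → t ∈ T := by
      intro t ht
      obtain ⟨s, hsT, hst⟩ : ∃ s ∈ T, s < t := by
        by_contra hcon
        push_neg at hcon
        exact hB ⟨t, fun s hs => hcon s hs⟩
      exact hTv.ordConnected.out hsT h0T ⟨hst.le, ht⟩
    have hnegv : (0 : Fin p → ℝ) ≤ -v := by
      refine hrec (-v) (fun t ht => ?_)
      have hmem := hall (-t) (by linarith)
      have heq : x + t • (-v) = x + (-t) • v := by module
      rw [heq]
      exact hmem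
    have htP : sSup T ∈ T := hTc.csSup_mem hTne hA
    have h0P : 0 ≤ sSup T := le_csSup hA h0T
    have hexitP : ∀ s : ℝ, 0 < s → (x + sSup T • v) + s • v ∉ C := by
      intro s hs hmem
      have heq : (x + sSup T • v) + s • v = x + (sSup T + s) • v := by module
      rw [heq] at hmem
      have : sSup T + s ∈ T := hmem
      linarith [le_csSup hA this]
    have hSP : x + sSup T • v ∈ S := hface _ v htP hvV hv0 hexitP
    have hxeq : x = (x + sSup T • v) + sSup T • (-v) := by module
    rw [hxeq]
    exact hKadd hSP (smul_nonneg h0P hnegv)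
  · -- unbounded above : v is a recession direction
    have hall : ∀ t : ℝ, 0 ≤ t → t ∈ T := by
      intro t ht
      obtain ⟨s, hsT, hst⟩ : ∃ s ∈ T, t < s := by
        by_contra hcon
        push_neg at hcon
        exact hA ⟨t, fun s hs => hcon s hs⟩
      exact hTv.ordConnected.out h0T hsT ⟨ht, hst.le⟩
    have hposv : (0 : Fin p → ℝ) ≤ v := hrec v hall
    have htM : sInf T ∈ T := hTc.csInf_mem hTne hB
    have h0M : sInf T ≤ 0 := csInf_le hB h0T
    have hexitM : ∀ s : ℝ, 0 < s → (x + sInf T • v) + s • (-v) ∉ C := by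
      intro s hs hmem
      have heq : (x + sInf T • v) + s • (-v) = x + (sInf T - s) • v := by module
      rw [heq] at hmem
      have : sInf T - s ∈ T := hmem
      linarith [csInf_le hB this]
    have hSM : x + sInf T • v ∈ S :=
      hface _ (-v) htM (neg_mem hvV) (neg_ne_zero.2 hv0) hexitM
    have hxeq : x = (x + sInf T • v) + (-sInf T) • v := by module
    rw [hxeq]
    exact hKadd hSM (smul_nonneg (by linarith) hposv)
  · -- unbounded both ways : impossible
    exfalso
    have hallp : ∀ t : ℝ, 0 ≤ t → t ∈ T := by
      intro t ht
      obtain ⟨s, hsT, hst⟩ : ∃ s ∈ T, t < s := by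
        by_contra hcon
        push_neg at hcon
        exact hA ⟨t, fun s hs => hcon s hs⟩
      exact hTv.ordConnected.out h0T hsT ⟨ht, hst.le⟩
    have halln : ∀ t : ℝ, t ≤ 0 → t ∈ T := by
      intro t ht
      obtain ⟨s, hsT, hst⟩ : ∃ s ∈ T, s < t := by
        by_contra hcon
        push_neg at hcon
        exact hB ⟨t, fun s hs => hcon s hs⟩
      exact hTv.ordConnected.out hsT h0T ⟨hst.le, ht⟩
    have hposv : (0 : Fin p → ℝ) ≤ v := hrec v hallp
    have hnegv : (0 : Fin p → ℝ) ≤ -v := by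
      refine hrec (-v) (fun t ht => ?_)
      have hmem := halln (-t) (by linarith)
      have heq : x + t • (-v) = x + (-t) • v := by module
      rw [heq]
      exact hmem
    exact hv0 (le_antisymm (neg_nonneg.1 hnegv) hposv)

theorem stmt_3 (p : ℕ) (hp : 1 ≤ p) (Y : Set (Fin p → ℝ))
    (hne : Y.Nonempty) (b : Fin p → ℝ) (hb : ∀ y ∈ Y, b ≤ y)
    (hclosed : IsClosed (upImage p Y)) :
    upImage p Y = convexHull ℝ (ESN p Y) + {r : Fin p → ℝ | 0 ≤ r} := by
  set K : Set (Fin p → ℝ) := {r | 0 ≤ r} with hK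
  have h0K : (0 : Fin p → ℝ) ∈ K := le_refl (0 : Fin p → ℝ)
  have hKv : Convex ℝ K := by
    intro r hr s hs a b' ha hb' hab
    have hr' : (0 : Fin p → ℝ) ≤ r := hr
    have hs' : (0 : Fin p → ℝ) ≤ s := hs
    show (0 : Fin p → ℝ) ≤ a • r + b' • s
    rw [Pi.le_def]
    intro i
    simpa using add_nonneg (mul_nonneg ha (hr' i)) (mul_nonneg hb' (hs' i))
  set C : Set (Fin p → ℝ) := upImage p Y with hC
  have hCeq : C = convexHull ℝ Y + K := rfl
  have hsubC : convexHull ℝ Y ⊆ C := by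
    intro c hc
    exact Set.mem_add.2 ⟨c, hc, 0, h0K, add_zero c⟩
  have hCv : Convex ℝ C := (convex_convexHull ℝ Y).add hKv
  have hbhull : convexHull ℝ Y ⊆ {z | b ≤ z} := by
    apply convexHull_min hb
    intro z1 hz1 z2 hz2 a b' ha hb' hab
    show b ≤ a • z1 + b' • z2
    rw [Pi.le_def]
    intro i
    have h1 : b i ≤ z1 i := hz1 i
    have h2 : b i ≤ z2 i := hz2 i
    have : (a • z1 + b' • z2) i = a * z1 i + b' * z2 i := by simp
    rw [this]
    calc b i = (a + b') * b i := by rw [hab, one_mul]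
      _ = a * b i + b' * b i := by ring
      _ ≤ a * z1 i + b' * z2 i :=
          add_le_add (mul_le_mul_of_nonneg_left h1 ha) (mul_le_mul_of_nonneg_left h2 hb')
  have hbC : ∀ z ∈ C, b ≤ z := by
    intro z hz
    obtain ⟨c, hc, r, hr, rfl⟩ := Set.mem_add.1 hz
    have h1 : b ≤ c := hbhull hc
    have h2 : (0 : Fin p → ℝ) ≤ r := hr
    intro i
    have := add_le_add (h1 i) (h2 i)
    simpa using this
  -- extreme points of C are in ESN
  have extsub : C.extremePoints ℝ ⊆ ESN p Y := by
    intro e he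
    have hmid : ∀ c r : Fin p → ℝ, c ∈ convexHull ℝ Y → (0 : Fin p → ℝ) ≤ r →
        e = c + r → c = e := by
      intro c r hc hr heq
      have h1 : c ∈ C := hsubC hc
      have h2 : c + (2 : ℝ) • r ∈ C :=
        Set.mem_add.2 ⟨c, hc, (2 : ℝ) • r, smul_nonneg (by norm_num) hr, rfl⟩
      have hseg : e ∈ openSegment ℝ c (c + (2 : ℝ) • r) := by
        refine ⟨1/2, 1/2, by norm_num, by norm_num, by norm_num, ?_⟩
        rw [heq]; module
      exact (he.2 h1 h2 hseg)
    -- e is in the convex hull of Y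
    obtain ⟨c, hc, r, hr, hcr⟩ := Set.mem_add.1 he.1
    have hce : c = e := hmid c r hc hr hcr.symm
    have heHull : e ∈ convexHull ℝ Y := hce ▸ hc
    have heExtHull : e ∈ (convexHull ℝ Y).extremePoints ℝ :=
      inter_extremePoints_subset_extremePoints_of_subset hsubC ⟨heHull, he⟩
    have heY : e ∈ Y := extremePoints_convexHull_subset heExtHull
    refine ⟨⟨heY, fun y' hy' hle => ?_⟩, heExtHull⟩
    exact hmid y' (e - y') (subset_convexHull ℝ Y hy') (sub_nonneg.2 hle)
      (by abel)
  apply Set.Subset.antisymm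
  · intro x hx
    have hx' := klee (Module.finrank ℝ (vectorSpan ℝ C)) C hclosed hCv ⟨b, hbC⟩ le_rfl x hx
    obtain ⟨c, hc, r, hr, hcr⟩ := Set.mem_add.1 hx'
    exact Set.mem_add.2 ⟨c, convexHull_mono extsub hc, r, hr, hcr⟩
  · have hsub : ESN p Y ⊆ Y := fun y hy => hy.1.1
    intro z hz
    obtain ⟨c, hc, r, hr, hcr⟩ := Set.mem_add.1 hz
    exact Set.mem_add.2 ⟨c, convexHull_mono hsub hc, r, hr, hcr⟩
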